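/- arXiv:2210.04011 — 8 statements merged into one kernel-verified Lean document; each statement's English description precedes it below -/
import Mathlib

section
/- If S solves S'(t) = -(p+q)S + q e^{-pt} S with S(0)=1, then u_n(t) := e^{-(n-1)pt} S(t) satisfies the infinite system u_n'(t) = -(np+q)u_n + q u_{n+1} with u_n(0)=1 for every n ≥ 1. -/
open Real

theorem circle_ansatz_closes_infinite_system (p q : ℝ) (hp : 0 < p) (hq : 0 ≤ q)
    (S : ℝ → ℝ) (hS0 : S 0 = 1)
    (hS : ∀ t : ℝ, HasDerivAt S (-(p + q) * S t + q * Real.exp (-p * t) * S t) t) :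
    ∀ n : ℕ, 1 ≤ n →
      (∀ t : ℝ, HasDerivAt (fun t => Real.exp (-((n : ℝ) - 1) * p * t) * S t)
        (-((n : ℝ) * p + q) * (Real.exp (-((n : ℝ) - 1) * p * t) * S t)
          + q * (Real.exp (-(((n : ℝ) + 1) - 1) * p * t) * S t)) t) ∧
      Real.exp (-((n : ℝ) - 1) * p * 0) * S 0 = 1 := by
  intro n hn
  constructor
  · intro t
    have he : HasDerivAt (fun t : ℝ => Real.exp (-((n : ℝ) - 1) * p * t))
        (-((n : ℝ) - 1) * p * Real.exp (-((n : ℝ) - 1) * p * t)) t := by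
      simpa [mul_comm] using ((hasDerivAt_id t).const_mul (-((n : ℝ) - 1) * p)).exp
    have := he.mul (hS t)
    refine this.congr_deriv ?_
    have : Real.exp (-(((n : ℝ) + 1) - 1) * p * t)
        = Real.exp (-((n : ℝ) - 1) * p * t) * Real.exp (-p * t) := by
      rw [← Real.exp_add]; ring_nf
    rw [this]; ring
  · simp [hS0]
end

section
/- If f : [0,∞) → ℝ is differentiable, f(0) = 0, and f'(t) < (1-f(t))(p + q f(t)) for all t > 0 with p,q > 0, then f(t) < f_Bass(t) for all t > 0, where f_Bass is the solution of f'(t) = (1-f)(p+qf), f(0)=0. -/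
open Real Set Filter Topology

noncomputable def gB (p q : ℝ) (t : ℝ) : ℝ :=
  (1 - Real.exp (-(p + q) * t)) / (1 + (q / p) * Real.exp (-(p + q) * t))

lemma gB_deriv (p q : ℝ) (hp : 0 < p) (hq : 0 < q) (t : ℝ) :
    HasDerivAt (gB p q) ((1 - gB p q t) * (p + q * gB p q t)) t := by
  have hE : HasDerivAt (fun s : ℝ => Real.exp (-(p + q) * s))
      (Real.exp (-(p + q) * t) * (-(p + q))) t := by
    simpa using ((hasDerivAt_id t).const_mul (-(p+q))).exp
  have hden : ∀ s : ℝ, (0:ℝ) < 1 + (q / p) * Real.exp (-(p + q) * s) := by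
    intro s; positivity
  have hnum : HasDerivAt (fun s : ℝ => 1 - Real.exp (-(p + q) * s))
      (-(Real.exp (-(p + q) * t) * (-(p + q)))) t := hE.const_sub 1
  have hden' : HasDerivAt (fun s : ℝ => 1 + (q / p) * Real.exp (-(p + q) * s))
      ((q / p) * (Real.exp (-(p + q) * t) * (-(p + q)))) t :=
    (hE.const_mul (q / p)).const_add 1
  have h := hnum.div hden' (hden t).ne'
  convert h using 1
  · rfl
  · rfl
  · rfl
  unfold gB
  have hA := (hden t).ne'
  field_simp
  ring

theorem bass_inequality_lemma (p q : ℝ) (hp : 0 < p) (hq : 0 < q)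
    (f : ℝ → ℝ) (hf0 : f 0 = 0) (d : ℝ → ℝ)
    (hf : ∀ t ≥ (0:ℝ), HasDerivAt f (d t) t)
    (hineq : ∀ t > (0:ℝ), d t < (1 - f t) * (p + q * f t)) :
    ∀ t > (0:ℝ),
      f t < (1 - Real.exp (-(p + q) * t)) / (1 + (q / p) * Real.exp (-(p + q) * t)) := by
  set g := gB p q with hg_def
  have hg0 : g 0 = 0 := by simp [hg_def, gB]
  have hgC : Continuous g :=
    continuous_iff_continuousAt.2 fun t => (gB_deriv p q hp hq t).continuousAt
  have hfC : ContinuousOn f (Ici 0) :=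
    fun t ht => (hf t ht).continuousAt.continuousWithinAt
  -- w = f - g
  set w : ℝ → ℝ := fun t => f t - g t with hw_def
  have hwC : ContinuousOn w (Ici 0) := hfC.sub hgC.continuousOn
  have hw0 : w 0 = 0 := by simp [hw_def, hf0, hg0]
  have hwD : ∀ x ≥ (0:ℝ), HasDerivAt w (d x - (1 - g x) * (p + q * g x)) x :=
    fun x hx => (hf x hx).sub (gB_deriv p q hp hq x)
  -- Step A: f ≤ g on [0, ∞)
  have hle : ∀ t ≥ (0:ℝ), f t ≤ g t := by
    by_contra hcon
    push_neg at hcon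
    obtain ⟨t1, ht1, hgt⟩ := hcon
    have hwt1 : 0 < w t1 := sub_pos.2 hgt
    -- bounds on [0, t1]
    obtain ⟨Mf, hMf⟩ := (isCompact_Icc (a := (0:ℝ)) (b := t1)).exists_bound_of_continuousOn
      (hfC.mono (Icc_subset_Ici_self))
    obtain ⟨Mg, hMg⟩ := (isCompact_Icc (a := (0:ℝ)) (b := t1)).exists_bound_of_continuousOn
      (hgC.continuousOn (s := Icc 0 t1))
    have ht1pos : 0 < t1 := by
      rcases lt_or_eq_of_le ht1 with h | h
      · exact h
      · exfalso; rw [← h] at hgt; rw [hf0, hg0] at hgt; exact lt_irrefl 0 hgt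
    have hMf0 : 0 ≤ Mf := le_trans (norm_nonneg _) (hMf 0 ⟨le_refl _, ht1⟩)
    have hMg0 : 0 ≤ Mg := le_trans (norm_nonneg _) (hMg 0 ⟨le_refl _, ht1⟩)
    set K : ℝ := |q - p| + q * (Mf + Mg) with hK_def
    have hK0 : 0 ≤ K := by positivity
    set S : Set ℝ := {t ∈ Icc 0 t1 | f t ≤ g t} with hS_def
    have hS0 : (0:ℝ) ∈ S := ⟨⟨le_refl _, ht1.le⟩, by rw [hf0, hg0]⟩
    have hSne : S.Nonempty := ⟨0, hS0⟩
    have hSbdd : BddAbove S := ⟨t1, fun x hx => hx.1.2⟩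
    have hSclosed : IsClosed S := by
      have : S = Icc 0 t1 ∩ w ⁻¹' (Iic 0) := by
        ext x; simp [hS_def, hw_def, sub_nonpos]
      rw [this]
      exact (hwC.mono Icc_subset_Ici_self).preimage_isClosed_of_isClosed
        isClosed_Icc isClosed_Iic
    set t0 : ℝ := sSup S with ht0_def
    have ht0S : t0 ∈ S := hSclosed.csSup_mem hSne hSbdd
    have ht0_nonneg : 0 ≤ t0 := ht0S.1.1
    have ht0_le : t0 ≤ t1 := ht0S.1.2
    have ht0_lt : t0 < t1 := by
      rcases lt_or_eq_of_le ht0_le with h | h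
      · exact h
      · exfalso; rw [h] at ht0S; exact absurd ht0S.2 (not_le.2 hgt)
    have hwt0 : w t0 ≤ 0 := sub_nonpos.2 ht0S.2
    have hgtS : ∀ x, t0 < x → x ≤ t1 → 0 < w x := by
      intro x hx hx1
      by_contra hcx
      push_neg at hcx
      have hxS : x ∈ S := ⟨⟨le_trans ht0_nonneg hx.le, hx1⟩, sub_nonpos.1 hcx⟩
      exact absurd (le_csSup hSbdd hxS) (not_le.2 hx)
    -- Gronwall on [s, t1] for s in (t0, t1)
    have key : ∀ s ∈ Ioo t0 t1, w t1 ≤ w s * Real.exp (K * (t1 - s)) := by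
      intro s hs
      have hs0 : 0 ≤ s := le_trans ht0_nonneg hs.1.le
      have hmain := le_gronwallBound_of_liminf_deriv_right_le
        (f := w) (f' := fun x => d x - (1 - g x) * (p + q * g x))
        (δ := w s) (K := K) (ε := 0) (a := s) (b := t1)
        (hwC.mono (fun x hx => le_trans hs0 hx.1))
        (fun x hx r hr => ((hwD x (le_trans hs0 hx.1)).hasDerivWithinAt).liminf_right_slope_le hr)
        (le_refl _)
        (by
          intro x hx
          have hx0 : 0 < x := lt_of_le_of_lt ht0_nonneg (lt_of_lt_of_le hs.1 hx.1)
          have hxt1 : x ≤ t1 := hx.2.le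
          have hwx : 0 < w x := hgtS x (lt_of_lt_of_le hs.1 hx.1) hxt1
          have hdx := hineq x hx0
          have hfb : |f x| ≤ Mf := by
            have := hMf x ⟨hx0.le, hxt1⟩; rwa [Real.norm_eq_abs] at this
          have hgb : |g x| ≤ Mg := by
            have := hMg x ⟨hx0.le, hxt1⟩; rwa [Real.norm_eq_abs] at this
          have habs : q - p - q * (f x + g x) ≤ K := by
            have h1 : q - p ≤ |q - p| := le_abs_self _
            have h2 : -(f x + g x) ≤ Mf + Mg := by
              have := neg_abs_le (f x); have := neg_abs_le (g x); linarith [abs_le.1 hfb, abs_le.1 hgb]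
            nlinarith
          have hdiff : (1 - f x) * (p + q * f x) - (1 - g x) * (p + q * g x)
              = w x * (q - p - q * (f x + g x)) := by
            simp only [hw_def]; ring
          have hmul : w x * (q - p - q * (f x + g x)) ≤ w x * K :=
            mul_le_mul_of_nonneg_left habs hwx.le
          have hcomm : w x * K = K * w x := mul_comm _ _
          show d x - (1 - g x) * (p + q * g x) ≤ K * w x + 0
          linarith
          )
      have := hmain t1 ⟨hs.2.le, le_refl _⟩
      rwa [gronwallBound_ε0] at this
    -- limit s → t0+
    set C : ℝ := Real.exp (K * t1) with hC_def
    have hC0 : 0 < C := Real.exp_pos _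
    have hbound : ∀ s ∈ Ioo t0 t1, w t1 / C ≤ w s := by
      intro s hs
      have h1 := key s hs
      have hs0 : 0 ≤ s := le_trans ht0_nonneg hs.1.le
      have hws : 0 < w s := hgtS s hs.1 hs.2.le
      have hexp : Real.exp (K * (t1 - s)) ≤ C := by
        apply Real.exp_le_exp.2
        nlinarith
      have : w t1 ≤ w s * C := le_trans h1 (by nlinarith)
      rw [div_le_iff₀ hC0]; linarith
    have htend : Tendsto w (𝓝[Ioo t0 t1] t0) (𝓝 (w t0)) :=
      ((hwC t0 ht0_nonneg).mono (fun x hx => le_trans ht0_nonneg hx.1.le)).tendsto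
    have hne : (𝓝[Ioo t0 t1] t0).NeBot := left_nhdsWithin_Ioo_neBot ht0_lt
    have hfin : w t1 / C ≤ w t0 :=
      ge_of_tendsto htend (eventually_mem_nhdsWithin.mono fun s hs => hbound s hs)
    have hpos' : 0 < w t1 / C := div_pos hwt1 hC0
    exact absurd (hfin.trans hwt0) (not_le.2 hpos')
  -- Step B: strict inequality
  intro t ht
  show f t < g t
  by_contra hcon
  have heq : f t = g t := le_antisymm (hle t ht.le) (not_lt.1 hcon)
  have hd : HasDerivAt (fun s => g s - f s) ((1 - g t) * (p + q * g t) - d t) t :=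
    (gB_deriv p q hp hq t).sub (hf t ht.le)
  have hpos : 0 < (1 - g t) * (p + q * g t) - d t := by
    have := hineq t ht; rw [heq] at this; linarith
  have hmin : IsLocalMin (fun s => g s - f s) t := by
    have hev : ∀ᶠ s in 𝓝 t, s ∈ Ioi (0:ℝ) := isOpen_Ioi.mem_nhds ht
    refine hev.mono fun s hs => ?_
    have := hle s (le_of_lt hs)
    simp only [heq]; linarith
  have := hmin.hasDerivAt_eq_zero hd
  linarith
end

section
/- Consider the 2-group heterogeneous Bass system f₁'(t) = (1/2 - f₁)·2q(f₁+f₂), f₂'(t) = (1/2 - f₂)·2p, with f₁(0)=f₂(0)=0 and p ≥ q > 0. Then f₂(t) > f₁(t) for all t > 0. -/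
open Real MeasureTheory Set

theorem two_group_f2_gt_f1 (p q : ℝ) (hq : 0 < q) (hpq : q ≤ p)
    (f₁ f₂ : ℝ → ℝ) (h₁0 : f₁ 0 = 0) (h₂0 : f₂ 0 = 0)
    (hf₁ : ∀ t ≥ (0:ℝ), HasDerivAt f₁ ((1 / 2 - f₁ t) * (2 * q * (f₁ t + f₂ t))) t)
    (hf₂ : ∀ t ≥ (0:ℝ), HasDerivAt f₂ ((1 / 2 - f₂ t) * (2 * p)) t) :
    ∀ t > (0:ℝ), f₁ t < f₂ t := by
  have hp : 0 < p := lt_of_lt_of_le hq hpq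
  have hc₁ : ContinuousOn f₁ (Ici 0) := fun x hx => ((hf₁ x hx).continuousAt).continuousWithinAt
  have hc₂ : ContinuousOn f₂ (Ici 0) := fun x hx => ((hf₂ x hx).continuousAt).continuousWithinAt
  -- Step A : integrating factor for f₂
  have hF : ∀ x ≥ (0:ℝ), (1/2 - f₂ x) * Real.exp (2*p*x) = 1/2 := by
    intro x hx
    have key := constant_of_has_deriv_right_zero
      (f := fun t => (1/2 - f₂ t) * Real.exp (2*p*t)) (a := 0) (b := x)
      (ContinuousOn.mul (continuousOn_const.sub (hc₂.mono (Icc_subset_Ici_self)))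
        (Real.continuous_exp.comp (continuous_const.mul continuous_id)).continuousOn)
      (by
        intro y hy
        have hexp : HasDerivAt (fun t => Real.exp (2*p*t)) (Real.exp (2*p*y) * (2*p)) y := by
          have h2 : HasDerivAt (fun t : ℝ => 2*p*t) (2*p) y := by
            simpa using (hasDerivAt_id y).const_mul (2*p)
          exact h2.exp
        have hprod := ((hasDerivAt_const y (1/2:ℝ)).sub (hf₂ y hy.1)).mul hexp
        have h0 : (0 - (1/2 - f₂ y) * (2*p)) * Real.exp (2*p*y)
            + (1/2 - f₂ y) * (Real.exp (2*p*y) * (2*p)) = 0 := by ring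
        replace hprod := hprod.congr_deriv h0
        exact hprod.hasDerivWithinAt)
      x ⟨hx, le_refl x⟩
    simpa [h₂0] using key
  have hf₂lt : ∀ x ≥ (0:ℝ), f₂ x < 1/2 := by
    intro x hx
    have h := hF x hx
    nlinarith [Real.exp_pos (2*p*x)]
  -- Step B : integrating factor for f₁
  set g : ℝ → ℝ := fun s => 2*q*(f₁ s + f₂ s) with hg
  have hgc : ContinuousOn g (Ici 0) := continuousOn_const.mul (hc₁.add hc₂)
  set K : ℝ → ℝ := fun x => ∫ s in (0:ℝ)..x, g s with hK
  have hKd : ∀ y ≥ (0:ℝ), HasDerivWithinAt K (g y) (Ici y) y := by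
    intro y hy
    have hsub : Ici y ⊆ Ici (0:ℝ) := Ici_subset_Ici.2 hy
    have hint : IntervalIntegrable g volume 0 y :=
      (hgc.mono (by rw [uIcc_of_le hy]; exact Icc_subset_Ici_self)).intervalIntegrable
    have hsub' : Ioi y ⊆ Ici (0:ℝ) := (Ioi_subset_Ici le_rfl).trans hsub
    have hmeas : StronglyMeasurableAtFilter g (nhdsWithin y (Ioi y)) volume :=
      ⟨Ici 0, Filter.mem_of_superset self_mem_nhdsWithin hsub',
        hgc.aestronglyMeasurable measurableSet_Ici⟩
    exact intervalIntegral.integral_hasDerivWithinAt_right hint hmeas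
      (((hgc y hy).mono hsub'))
  have hKc : ∀ x ≥ (0:ℝ), ContinuousOn K (Icc 0 x) := by
    intro x hx
    have : IntegrableOn g (uIcc 0 x) := by
      rw [uIcc_of_le hx]
      exact (hgc.mono Icc_subset_Ici_self).integrableOn_compact isCompact_Icc
    simpa [uIcc_of_le hx] using intervalIntegral.continuousOn_primitive_interval this
  have hK0 : K 0 = 0 := intervalIntegral.integral_same
  have hG : ∀ x ≥ (0:ℝ), (1/2 - f₁ x) * Real.exp (K x) = 1/2 := by
    intro x hx
    have key := constant_of_has_deriv_right_zero
      (f := fun t => (1/2 - f₁ t) * Real.exp (K t)) (a := 0) (b := x)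
      (ContinuousOn.mul (continuousOn_const.sub (hc₁.mono (Icc_subset_Ici_self)))
        (Real.continuous_exp.comp_continuousOn (hKc x hx)))
      (by
        intro y hy
        have hexp : HasDerivWithinAt (fun t => Real.exp (K t)) (Real.exp (K y) * g y) (Ici y) y :=
          (hKd y hy.1).exp
        have hprod := (((hasDerivAt_const y (1/2:ℝ)).sub (hf₁ y hy.1)).hasDerivWithinAt).mul hexp
        have h0 : (0 - (1/2 - f₁ y) * (2 * q * (f₁ y + f₂ y))) * Real.exp (K y)
            + (1/2 - f₁ y) * (Real.exp (K y) * g y) = 0 := by simp only [hg]; ring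
        replace hprod := hprod.congr_deriv h0
        exact hprod)
      x ⟨hx, le_refl x⟩
    simpa [h₁0, hK0] using key
  have hf₁lt : ∀ x ≥ (0:ℝ), f₁ x < 1/2 := by
    intro x hx
    have h := hG x hx
    nlinarith [Real.exp_pos (K x)]
  -- Step C : conclude
  intro t ht
  have hKlt : K t < 2*p*t := by
    have hlt : (∫ s in (0:ℝ)..t, g s) < ∫ s in (0:ℝ)..t, (2*p) := by
      apply intervalIntegral.integral_lt_integral_of_continuousOn_of_le_of_exists_lt ht
        (hgc.mono Icc_subset_Ici_self) continuousOn_const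
      · intro x hx
        have h1 := hf₁lt x hx.1.le
        have h2 := hf₂lt x hx.1.le
        simp only [hg]
        nlinarith
      · exact ⟨0, ⟨le_refl 0, ht.le⟩, by simp [hg, h₁0, h₂0]; positivity⟩
    have hconst : (∫ s in (0:ℝ)..t, (2*p:ℝ)) = 2*p*t := by
      simp [intervalIntegral.integral_const]; ring
    rw [hconst] at hlt
    exact hlt
  have hE : Real.exp (K t) < Real.exp (2*p*t) := Real.exp_lt_exp.2 hKlt
  have hA := hF t ht.le
  have hB := hG t ht.le
  have ha : 0 < 1/2 - f₁ t := by linarith [hf₁lt t ht.le]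
  have hb : 0 < 1/2 - f₂ t := by linarith [hf₂lt t ht.le]
  nlinarith [Real.exp_pos (K t), Real.exp_pos (2*p*t)]
end

section
/- Consider the 2-group heterogeneous Bass system f₁'(t) = (1/2 - f₁)·2q(f₁+f₂), f₂'(t) = (1/2 - f₂)·2p, with f₁(0)=f₂(0)=0 and p ≥ q > 0. Then the total adoption f^het := f₁ + f₂ satisfies f^het(t) < f^hom(t) for all t > 0, where f^hom is the solution of (f^hom)' = (1-f^hom)(p + q f^hom) with f^hom(0)=0. -/
open Real

/-- The homogeneous Bass solution. -/
noncomputable def homSol (p q : ℝ) : ℝ → ℝ :=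
  fun x => (1 - Real.exp (-(p + q) * x)) / (1 + (q / p) * Real.exp (-(p + q) * x))

lemma homSol_zero (p q : ℝ) : homSol p q 0 = 0 := by
  simp [homSol]

lemma homSol_hasDerivAt (p q : ℝ) (hp : 0 < p) (hq : 0 < q) (x : ℝ) :
    HasDerivAt (homSol p q) ((1 - homSol p q x) * (p + q * homSol p q x)) x := by
  have hden : (0:ℝ) < 1 + q / p * Real.exp (-(p + q) * x) := by positivity
  have hE : HasDerivAt (fun y : ℝ => Real.exp (-(p + q) * y))
      (Real.exp (-(p + q) * x) * (-(p + q) * 1)) x :=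
    ((hasDerivAt_id x).const_mul (-(p + q))).exp
  have hnum := (hasDerivAt_const x (1:ℝ)).sub hE
  have hden' := (hasDerivAt_const x (1:ℝ)).add (hE.const_mul (q / p))
  have h := hnum.div hden' (ne_of_gt hden)
  have hgoal : HasDerivAt (fun y : ℝ =>
      (1 - Real.exp (-(p + q) * y)) / (1 + q / p * Real.exp (-(p + q) * y)))
      ((1 - homSol p q x) * (p + q * homSol p q x)) x := by
    refine h.congr_deriv ?_
    simp only [Pi.add_apply, Pi.sub_apply]
    have hp' : p ≠ 0 := ne_of_gt hp
    have hd0 : (1 + q / p * Real.exp (-(p + q) * x)) ≠ 0 := ne_of_gt hden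
    unfold homSol
    field_simp
    ring
  exact hgoal

lemma homSol_continuous (p q : ℝ) (hp : 0 < p) (hq : 0 < q) :
    Continuous (homSol p q) :=
  continuous_iff_continuousAt.mpr fun x => (homSol_hasDerivAt p q hp hq x).continuousAt

lemma prim_hasDerivAt {g : ℝ → ℝ} (hg : Continuous g) (x : ℝ) :
    HasDerivAt (fun u => ∫ s in (0:ℝ)..u, g s) (g x) x :=
  (hg.integral_hasStrictDerivAt 0 x).hasDerivAt

lemma prim_continuous {g : ℝ → ℝ} (hg : Continuous g) :
    Continuous (fun u => ∫ s in (0:ℝ)..u, g s) :=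
  intervalIntegral.continuous_primitive (fun a b => hg.intervalIntegrable a b) 0

lemma pos_of_hasDerivAt_pos {φ d : ℝ → ℝ} (hcont : ContinuousOn φ (Set.Ici 0))
    (hd : ∀ x, 0 < x → HasDerivAt φ (d x) x) (hpos : ∀ x, 0 < x → 0 < d x)
    (h0 : φ 0 = 0) {t : ℝ} (ht : 0 < t) : 0 < φ t := by
  have hm : StrictMonoOn φ (Set.Ici 0) := by
    apply strictMonoOn_of_deriv_pos (convex_Ici 0) hcont
    intro x hx
    rw [interior_Ici] at hx
    rw [(hd x hx).deriv]
    exact hpos x hx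
  have := hm Set.self_mem_Ici (Set.mem_Ici.mpr ht.le) ht
  rwa [h0] at this

lemma eq_of_hasDerivAt_zero {φ : ℝ → ℝ} (hd : ∀ x, 0 ≤ x → HasDerivAt φ 0 x)
    {t : ℝ} (ht : 0 ≤ t) : φ t = φ 0 := by
  have hcont : ContinuousOn φ (Set.Icc 0 t) := fun x hx =>
    ((hd x hx.1).continuousAt).continuousWithinAt
  exact constant_of_has_deriv_right_zero hcont
    (fun x hx => (hd x hx.1).hasDerivWithinAt) t (Set.right_mem_Icc.mpr ht)

theorem two_group_het_slower (p q : ℝ) (hq : 0 < q) (hpq : q ≤ p)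
    (f₁ f₂ : ℝ → ℝ) (h₁0 : f₁ 0 = 0) (h₂0 : f₂ 0 = 0)
    (hf₁ : ∀ t ≥ (0:ℝ), HasDerivAt f₁ ((1 / 2 - f₁ t) * (2 * q * (f₁ t + f₂ t))) t)
    (hf₂ : ∀ t ≥ (0:ℝ), HasDerivAt f₂ ((1 / 2 - f₂ t) * (2 * p)) t) :
    ∀ t > (0:ℝ),
      f₁ t + f₂ t <
        (1 - Real.exp (-(p + q) * t)) / (1 + (q / p) * Real.exp (-(p + q) * t)) := by
  have hp : 0 < p := lt_of_lt_of_le hq hpq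
  have hf₁c : ∀ x, 0 ≤ x → ContinuousAt f₁ x := fun x hx => (hf₁ x hx).continuousAt
  have hf₂c : ∀ x, 0 ≤ x → ContinuousAt f₂ x := fun x hx => (hf₂ x hx).continuousAt
  -- extended continuous version of F = f₁ + f₂
  set Ft : ℝ → ℝ := fun s => f₁ (max s 0) + f₂ (max s 0) with hFt
  have hFtx : ∀ x, 0 ≤ x → Ft x = f₁ x + f₂ x := by
    intro x hx
    simp [hFt, max_eq_left hx]
  have hFtc : Continuous Ft := by
    rw [continuous_iff_continuousAt]
    intro x
    have hmax : ContinuousAt (fun s : ℝ => max s 0) x :=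
      (continuous_id.max continuous_const).continuousAt
    have h1 : ContinuousAt (f₁ ∘ fun s : ℝ => max s 0) x :=
      ContinuousAt.comp (hf₁c (max x 0) (le_max_right x 0)) hmax
    have h2 : ContinuousAt (f₂ ∘ fun s : ℝ => max s 0) x :=
      ContinuousAt.comp (hf₂c (max x 0) (le_max_right x 0)) hmax
    exact h1.add h2
  -- the integrating factor A
  set a : ℝ → ℝ := fun s => 2 * q * Ft s with ha
  have hac : Continuous a := continuous_const.mul hFtc
  set A : ℝ → ℝ := fun u => ∫ s in (0:ℝ)..u, a s with hA
  have hA' : ∀ x, HasDerivAt A (a x) x := fun x => prim_hasDerivAt hac x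
  have hAc : Continuous A := prim_continuous hac
  have hA0 : A 0 = 0 := intervalIntegral.integral_same
  -- Step 1 : f₂ < 1/2 on [0, ∞)
  have hf₂lt : ∀ x, 0 ≤ x → f₂ x < 1 / 2 := by
    intro x hx
    have hconst : ∀ y, 0 ≤ y → HasDerivAt (fun s => (1 / 2 - f₂ s) * Real.exp (2 * p * s)) 0 y := by
      intro y hy
      have h1 : HasDerivAt (fun s => 1 / 2 - f₂ s) (0 - (1 / 2 - f₂ y) * (2 * p)) y :=
        (hasDerivAt_const y (1 / 2 : ℝ)).sub (hf₂ y hy)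
      have h2 : HasDerivAt (fun s : ℝ => Real.exp (2 * p * s))
          (Real.exp (2 * p * y) * (2 * p * 1)) y :=
        ((hasDerivAt_id y).const_mul (2 * p)).exp
      have := h1.mul h2
      refine this.congr_deriv ?_
      ring
    have := eq_of_hasDerivAt_zero hconst hx
    simp only [h₂0, Real.exp_zero, mul_zero, mul_one] at this
    have hEp := Real.exp_pos (2 * p * x)
    nlinarith [this, hEp]
  -- Step 2 : f₁ < 1/2 on [0, ∞)
  have hf₁lt : ∀ x, 0 ≤ x → f₁ x < 1 / 2 := by
    intro x hx
    have hconst : ∀ y, 0 ≤ y → HasDerivAt (fun s => (1 / 2 - f₁ s) * Real.exp (A s)) 0 y := by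
      intro y hy
      have h1 : HasDerivAt (fun s => 1 / 2 - f₁ s)
          (0 - (1 / 2 - f₁ y) * (2 * q * (f₁ y + f₂ y))) y :=
        (hasDerivAt_const y (1 / 2 : ℝ)).sub (hf₁ y hy)
      have h2 : HasDerivAt (fun s : ℝ => Real.exp (A s)) (Real.exp (A y) * a y) y :=
        (hA' y).exp
      have := h1.mul h2
      refine this.congr_deriv ?_
      rw [ha]
      simp only [hFtx y hy]
      ring
    have := eq_of_hasDerivAt_zero hconst hx
    simp only [h₁0, hA0, Real.exp_zero, mul_zero, mul_one] at this
    have hEp := Real.exp_pos (A x)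
    nlinarith [this, hEp]
  -- p - q * (f₁ + f₂) > 0 on [0, ∞)
  have hres : ∀ x, 0 ≤ x → 0 < p - q * (f₁ x + f₂ x) := by
    intro x hx
    have h1 := hf₁lt x hx
    have h2 := hf₂lt x hx
    nlinarith
  -- Step 3 : f₁ < f₂ on (0, ∞)
  have hw : ∀ x, 0 < x → f₁ x < f₂ x := by
    intro x hx
    have hψcont : ContinuousOn (fun s => (f₂ s - f₁ s) * Real.exp (A s)) (Set.Ici 0) := by
      intro y hy
      exact (((hf₂c y hy).sub (hf₁c y hy)).mul
        ((Real.continuous_exp.continuousAt).comp hAc.continuousAt)).continuousWithinAt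
    have hψpos : 0 < (f₂ x - f₁ x) * Real.exp (A x) := by
      refine pos_of_hasDerivAt_pos (d := fun y =>
        ((1 / 2 - f₂ y) * (2 * p) - (1 / 2 - f₁ y) * (2 * q * (f₁ y + f₂ y))) * Real.exp (A y)
          + (f₂ y - f₁ y) * (Real.exp (A y) * a y)) hψcont ?_ ?_ (by simp [h₁0, h₂0]) hx
      · intro y hy
        exact ((hf₂ y hy.le).sub (hf₁ y hy.le)).mul ((hA' y).exp)
      · intro y hy
        have heq : ((1 / 2 - f₂ y) * (2 * p) - (1 / 2 - f₁ y) * (2 * q * (f₁ y + f₂ y)))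
            * Real.exp (A y) + (f₂ y - f₁ y) * (Real.exp (A y) * a y)
            = Real.exp (A y) * (2 * (1 / 2 - f₂ y) * (p - q * (f₁ y + f₂ y))) := by
          rw [ha]; simp only [hFtx y hy.le]; ring
        have h1 : (0:ℝ) < 1 / 2 - f₂ y := by linarith [hf₂lt y hy.le]
        have h2 := hres y hy.le
        have key : 0 < Real.exp (A y) * (2 * (1 / 2 - f₂ y) * (p - q * (f₁ y + f₂ y))) := by
          positivity
        exact lt_of_lt_of_eq key heq.symm
    nlinarith [hψpos, Real.exp_pos (A x)]
  -- Step 4 : the comparison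
  intro t ht
  set G : ℝ → ℝ := homSol p q with hG
  have hG' : ∀ x, HasDerivAt G ((1 - G x) * (p + q * G x)) x :=
    fun x => homSol_hasDerivAt p q hp hq x
  have hGc : Continuous G := homSol_continuous p q hp hq
  set b : ℝ → ℝ := fun s => p - q + q * (G s + Ft s) with hb
  have hbc : Continuous b := continuous_const.add (continuous_const.mul (hGc.add hFtc))
  set B : ℝ → ℝ := fun u => ∫ s in (0:ℝ)..u, b s with hB
  have hB' : ∀ x, HasDerivAt B (b x) x := fun x => prim_hasDerivAt hbc x
  have hBc : Continuous B := prim_continuous hbc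
  have hχcont : ContinuousOn (fun s => (G s - (f₁ s + f₂ s)) * Real.exp (B s)) (Set.Ici 0) := by
    intro y hy
    exact ((hGc.continuousAt.sub ((hf₁c y hy).add (hf₂c y hy))).mul
      ((Real.continuous_exp.continuousAt).comp hBc.continuousAt)).continuousWithinAt
  have hχpos : 0 < (G t - (f₁ t + f₂ t)) * Real.exp (B t) := by
    refine pos_of_hasDerivAt_pos (d := fun y =>
      ((1 - G y) * (p + q * G y)
          - ((1 / 2 - f₁ y) * (2 * q * (f₁ y + f₂ y)) + (1 / 2 - f₂ y) * (2 * p)))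
        * Real.exp (B y)
      + (G y - (f₁ y + f₂ y)) * (Real.exp (B y) * b y)) hχcont ?_ ?_ ?_ ht
    · intro y hy
      exact ((hG' y).sub ((hf₁ y hy.le).add (hf₂ y hy.le))).mul ((hB' y).exp)
    · intro y hy
      have heq : ((1 - G y) * (p + q * G y)
          - ((1 / 2 - f₁ y) * (2 * q * (f₁ y + f₂ y)) + (1 / 2 - f₂ y) * (2 * p)))
            * Real.exp (B y)
          + (G y - (f₁ y + f₂ y)) * (Real.exp (B y) * b y)
          = Real.exp (B y) * ((f₂ y - f₁ y) * (p - q * (f₁ y + f₂ y))) := by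
        rw [hb]; simp only [hFtx y hy.le]; ring
      have h1 : (0:ℝ) < f₂ y - f₁ y := by linarith [hw y hy]
      have h2 := hres y hy.le
      have key : 0 < Real.exp (B y) * ((f₂ y - f₁ y) * (p - q * (f₁ y + f₂ y))) := by
        positivity
      exact lt_of_lt_of_eq key heq.symm
    · simp [hG, homSol_zero, h₁0, h₂0]
  have hfinal : f₁ t + f₂ t < G t := by
    nlinarith [hχpos, Real.exp_pos (B t)]
  exact hfinal
end

section
/- Consider the system f₁'(t) = (1/2 - f₁)·4q·f₂, f₂'(t) = (1/2 - f₂)·2p with f₁(0)=f₂(0)=0, and let f^het = f₁+f₂; let f^hom solve (f^hom)' = (1-f^hom)(p+q f^hom), f^hom(0)=0. Then (f^het)'(0) = (f^hom)'(0) = p, (f^het)''(0) = 2p(q-p), and (f^hom)''(0) = p(q-p). Consequently if q > p > 0 then f^het(t) > f^hom(t) for all sufficiently small t > 0. -/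
open Real Set Topology Filter

theorem het_initially_faster (p q : ℝ) (hp : 0 < p) (hq : 0 < q)
    (f₁ f₂ fhom : ℝ → ℝ)
    (h₁0 : f₁ 0 = 0) (h₂0 : f₂ 0 = 0) (hhom0 : fhom 0 = 0)
    (hf₁ : ∀ t ∈ Ici (0:ℝ),
      HasDerivWithinAt f₁ ((1 / 2 - f₁ t) * (4 * q * f₂ t)) (Ici 0) t)
    (hf₂ : ∀ t ∈ Ici (0:ℝ),
      HasDerivWithinAt f₂ ((1 / 2 - f₂ t) * (2 * p)) (Ici 0) t)
    (hfhom : ∀ t ∈ Ici (0:ℝ),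
      HasDerivWithinAt fhom ((1 - fhom t) * (p + q * fhom t)) (Ici 0) t) :
    derivWithin (fun t => f₁ t + f₂ t) (Ici 0) 0 = p ∧
    derivWithin fhom (Ici 0) 0 = p ∧
    derivWithin (derivWithin (fun t => f₁ t + f₂ t) (Ici 0)) (Ici 0) 0 = 2 * p * (q - p) ∧
    derivWithin (derivWithin fhom (Ici 0)) (Ici 0) 0 = p * (q - p) ∧
    (p < q → ∃ δ > (0:ℝ), ∀ t ∈ Ioo (0:ℝ) δ, fhom t < f₁ t + f₂ t) := by
  have h0mem : (0:ℝ) ∈ Ici (0:ℝ) := self_mem_Ici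
  have hU : ∀ t ∈ Ici (0:ℝ), UniqueDiffWithinAt ℝ (Ici (0:ℝ)) t :=
    fun t ht => uniqueDiffOn_Ici 0 t ht
  -- first derivative of sum at 0
  have hsum : ∀ t ∈ Ici (0:ℝ), HasDerivWithinAt (fun t => f₁ t + f₂ t)
      ((1 / 2 - f₁ t) * (4 * q * f₂ t) + (1 / 2 - f₂ t) * (2 * p)) (Ici 0) t :=
    fun t ht => (hf₁ t ht).add (hf₂ t ht)
  have hsum0 : HasDerivWithinAt (fun t => f₁ t + f₂ t) p (Ici 0) 0 := by
    have := hsum 0 h0mem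
    rw [h₁0, h₂0] at this
    convert this using 1; ring
  have hhom0' : HasDerivWithinAt fhom p (Ici 0) 0 := by
    have := hfhom 0 h0mem
    rw [hhom0] at this
    convert this using 1; ring
  -- the first-derivative functions
  set g₁ : ℝ → ℝ := fun t => (1 / 2 - f₁ t) * (4 * q * f₂ t) + (1 / 2 - f₂ t) * (2 * p)
    with hg₁def
  set g₂ : ℝ → ℝ := fun t => (1 - fhom t) * (p + q * fhom t) with hg₂def
  have hderivsum : ∀ t ∈ Ici (0:ℝ), derivWithin (fun t => f₁ t + f₂ t) (Ici 0) t = g₁ t :=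
    fun t ht => (hsum t ht).derivWithin (hU t ht)
  have hderivhom : ∀ t ∈ Ici (0:ℝ), derivWithin fhom (Ici 0) t = g₂ t :=
    fun t ht => (hfhom t ht).derivWithin (hU t ht)
  -- second derivative of sum
  have hg₁ : HasDerivWithinAt g₁ (2 * p * (q - p)) (Ici 0) 0 := by
    have hA : HasDerivWithinAt (fun t => (1 / 2 - f₁ t))
        (-((1 / 2 - f₁ 0) * (4 * q * f₂ 0))) (Ici 0) 0 := (hf₁ 0 h0mem).const_sub _
    have hB : HasDerivWithinAt (fun t => 4 * q * f₂ t)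
        (4 * q * ((1 / 2 - f₂ 0) * (2 * p))) (Ici 0) 0 := (hf₂ 0 h0mem).const_mul _
    have hC : HasDerivWithinAt (fun t => (1 / 2 - f₂ t) * (2 * p))
        (-((1 / 2 - f₂ 0) * (2 * p)) * (2 * p)) (Ici 0) 0 :=
      ((hf₂ 0 h0mem).const_sub _).mul_const _
    have := (hA.mul hB).add hC
    refine this.congr_deriv ?_
    rw [h₁0, h₂0]; ring
  have hg₂ : HasDerivWithinAt g₂ (p * (q - p)) (Ici 0) 0 := by
    have hA : HasDerivWithinAt (fun t => (1 - fhom t))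
        (-((1 - fhom 0) * (p + q * fhom 0))) (Ici 0) 0 := (hfhom 0 h0mem).const_sub _
    have hB : HasDerivWithinAt (fun t => p + q * fhom t)
        (q * ((1 - fhom 0) * (p + q * fhom 0))) (Ici 0) 0 :=
      ((hfhom 0 h0mem).const_mul q).const_add p
    have := hA.mul hB
    refine this.congr_deriv ?_
    rw [hhom0]; ring
  refine ⟨hsum0.derivWithin (hU 0 h0mem), hhom0'.derivWithin (hU 0 h0mem), ?_, ?_, ?_⟩
  · rw [derivWithin_congr hderivsum (hderivsum 0 h0mem)]
    exact hg₁.derivWithin (hU 0 h0mem)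
  · rw [derivWithin_congr hderivhom (hderivhom 0 h0mem)]
    exact hg₂.derivWithin (hU 0 h0mem)
  · intro hpq
    -- h = difference of derivatives
    set h : ℝ → ℝ := fun t => g₁ t - g₂ t with hhdef
    have hh0 : h 0 = 0 := by simp only [hhdef, hg₁def, hg₂def, h₁0, h₂0, hhom0]; ring
    have hhd : HasDerivWithinAt h (p * (q - p)) (Ici 0) 0 := by
      have := hg₁.sub hg₂
      refine this.congr_deriv ?_; ring
    have hpos : 0 < p * (q - p) := mul_pos hp (by linarith)
    -- h t > 0 for small t > 0
    have hslope := hasDerivWithinAt_iff_tendsto_slope.mp hhd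
    rw [Ici_sdiff_left] at hslope
    have hev : ∀ᶠ t in 𝓝[>] (0:ℝ), 0 < slope h 0 t :=
      hslope.eventually (eventually_gt_nhds hpos)
    obtain ⟨δ, hδmem, hδsub⟩ := mem_nhdsGT_iff_exists_Ioo_subset.mp hev
    have hδpos : 0 < δ := hδmem
    have hhpos : ∀ t ∈ Ioo (0:ℝ) δ, 0 < h t := by
      intro t ht
      have := hδsub ht
      simp only [Set.mem_setOf_eq, slope_def_field] at this
      rw [hh0] at this
      have h' : 0 < h t / t := by
        simpa using this
      have := (div_pos_iff).mp h'
      rcases this with ⟨h1, _⟩ | ⟨_, h2⟩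
      · exact h1
      · linarith [ht.1]
    -- difference function
    set D : ℝ → ℝ := fun t => (f₁ t + f₂ t) - fhom t with hDdef
    have hDd : ∀ t ∈ Ici (0:ℝ), HasDerivWithinAt D (h t) (Ici 0) t :=
      fun t ht => (hsum t ht).sub (hfhom t ht)
    have hDcont : ContinuousOn D (Icc 0 δ) := by
      apply ContinuousOn.mono (s := Ici (0:ℝ))
      · exact fun t ht => (hDd t ht).continuousWithinAt
      · exact Icc_subset_Ici_self
    have hmono : StrictMonoOn D (Icc 0 δ) := by
      apply strictMonoOn_of_deriv_pos (convex_Icc 0 δ) hDcont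
      intro x hx
      rw [interior_Icc] at hx
      have hxIci : Ici (0:ℝ) ∈ 𝓝 x := Ici_mem_nhds hx.1
      have hDx : HasDerivAt D (h x) x := (hDd x (le_of_lt hx.1)).hasDerivAt hxIci
      rw [hDx.deriv]
      exact hhpos x hx
    refine ⟨δ, hδpos, fun t ht => ?_⟩
    have h0I : (0:ℝ) ∈ Icc (0:ℝ) δ := ⟨le_refl 0, le_of_lt hδpos⟩
    have htI : t ∈ Icc (0:ℝ) δ := ⟨le_of_lt ht.1, le_of_lt ht.2⟩
    have := hmono h0I htI ht.1
    simp only [hDdef, h₁0, h₂0, hhom0] at this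
    linarith
end

section
/- Let K ≥ 1, a_k > 0 with Σa_k = 1, p_k > 0, q_k ≥ 0, and let (f_k) solve the mildly heterogeneous Bass system f_k'(t) = (a_k - f_k)(p_k + q_k F) with F := Σ_{m} f_m and f_k(0)=0. Suppose p₁ ≤ p₂ ≤ ... ≤ p_K and q₁ ≤ q₂ ≤ ... ≤ q_K. Then for i > j with (p_i, q_i) ≠ (p_j, q_j), the normalized adoption fractions satisfy f_j(t)/a_j < f_i(t)/a_i for all t > 0. -/
open Real Finset

theorem group_adoption_monotone (K : ℕ) (hK : 1 ≤ K)
    (a p q : Fin K → ℝ)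
    (ha : ∀ k, 0 < a k) (hsum : ∑ k, a k = 1)
    (hp : ∀ k, 0 < p k) (hq : ∀ k, 0 ≤ q k)
    (hpmono : Monotone p) (hqmono : Monotone q)
    (f : Fin K → ℝ → ℝ) (hf0 : ∀ k, f k 0 = 0)
    (hode : ∀ k, ∀ t ≥ (0:ℝ),
      HasDerivAt (f k) ((a k - f k t) * (p k + q k * ∑ m, f m t)) t) :
    ∀ i j : Fin K, j < i → (p i, q i) ≠ (p j, q j) →
      ∀ t > (0:ℝ), f j t / a j < f i t / a i := by
  have hKne : Nonempty (Fin K) := ⟨⟨0, hK⟩⟩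
  set F : ℝ → ℝ := fun t => ∑ m, f m t with hFdef
  have hFd : ∀ t ≥ (0:ℝ), HasDerivAt F (∑ m, (a m - f m t) * (p m + q m * F t)) t := by
    intro t ht
    exact HasDerivAt.fun_sum (fun m _ => hode m t ht)
  have hFc : ∀ t ≥ (0:ℝ), ContinuousAt F t := fun t ht => (hFd t ht).continuousAt
  set G : ℝ → ℝ := fun t => F (max t 0) with hGdef
  have hGF : ∀ t ≥ (0:ℝ), G t = F t := fun t ht => by simp [hGdef, max_eq_left ht]
  have hGc : Continuous G := by
    rw [continuous_iff_continuousAt]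
    intro x
    rcases lt_or_ge x 0 with hx | hx
    · have heq : G =ᶠ[nhds x] fun _ => F 0 := by
        filter_upwards [Iio_mem_nhds hx] with y hy
        simp [hGdef, max_eq_right (le_of_lt (show y < 0 from hy))]
      exact ContinuousAt.congr continuousAt_const heq.symm
    · have hm : ContinuousAt (fun t : ℝ => max t 0) x :=
        (continuous_id.max continuous_const).continuousAt
      have h0 : max x 0 = x := max_eq_left hx
      have hFm : ContinuousAt F (max x 0) := by rw [h0]; exact hFc x hx
      have : ContinuousAt (F ∘ fun t : ℝ => max t 0) x := ContinuousAt.comp hFm hm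
      exact this
  set J : ℝ → ℝ := fun t => ∫ s in (0:ℝ)..t, G s with hJdef
  have hJd : ∀ t : ℝ, HasDerivAt J (G t) t := by
    intro t
    exact intervalIntegral.integral_hasDerivAt_right (hGc.intervalIntegrable 0 t)
      (hGc.stronglyMeasurableAtFilter _ _) hGc.continuousAt
  have hJ0 : J 0 = 0 := intervalIntegral.integral_same
  -- closed form
  have hclosed : ∀ k, ∀ t ≥ (0:ℝ), a k - f k t = a k * Real.exp (-(p k * t + q k * J t)) := by
    intro k t ht
    have key : ∀ x ∈ Set.Icc (0:ℝ) t,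
        (a k - f k x) * Real.exp (p k * x + q k * J x) = a k := by
      have hcont : ContinuousOn (fun x => (a k - f k x) * Real.exp (p k * x + q k * J x))
          (Set.Icc 0 t) := by
        intro x hx
        have h1 : ContinuousAt (fun x => (a k - f k x) * Real.exp (p k * x + q k * J x)) x := by
          have hfc : ContinuousAt (f k) x := (hode k x hx.1).continuousAt
          have hJc : ContinuousAt J x := (hJd x).continuousAt
          fun_prop
        exact h1.continuousWithinAt
      have hderiv : ∀ x ∈ Set.Ico (0:ℝ) t,
          HasDerivWithinAt (fun x => (a k - f k x) * Real.exp (p k * x + q k * J x))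
            0 (Set.Ici x) x := by
        intro x hx
        have hIk : HasDerivAt (fun x => p k * x + q k * J x) (p k + q k * F x) x := by
          have h1 : HasDerivAt (fun x : ℝ => p k * x) (p k) x := by
            simpa using (hasDerivAt_id x).const_mul (p k)
          have h2 : HasDerivAt (fun x => q k * J x) (q k * F x) x := by
            have := (hJd x).const_mul (q k)
            simpa [hGF x hx.1] using this
          exact h1.add h2
        have hfk : HasDerivAt (f k) ((a k - f k x) * (p k + q k * F x)) x := hode k x hx.1
        have hu : HasDerivAt (fun x => a k - f k x) (0 - (a k - f k x) * (p k + q k * F x)) x :=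
          (hasDerivAt_const x (a k)).sub hfk
        have hv : HasDerivAt (fun x => Real.exp (p k * x + q k * J x))
            (Real.exp (p k * x + q k * J x) * (p k + q k * F x)) x := hIk.exp
        have hmul := hu.mul hv
        have : (0 - (a k - f k x) * (p k + q k * F x)) * Real.exp (p k * x + q k * J x)
            + (a k - f k x) * (Real.exp (p k * x + q k * J x) * (p k + q k * F x)) = 0 := by ring
        rw [this] at hmul
        exact hmul.hasDerivWithinAt
      intro x hx
      have := constant_of_has_deriv_right_zero hcont hderiv x hx
      simpa [hf0 k, hJ0] using this
    have hkt := key t ⟨ht, le_rfl⟩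
    have hexp : Real.exp (p k * t + q k * J t) ≠ 0 := Real.exp_ne_zero _
    rw [Real.exp_neg, eq_mul_inv_iff_mul_eq₀ hexp]
    exact hkt
  have hfk : ∀ k, ∀ t ≥ (0:ℝ), f k t = a k * (1 - Real.exp (-(p k * t + q k * J t))) := by
    intro k t ht
    have := hclosed k t ht
    nlinarith [this]
  -- F vanishes at 0, positive derivative
  have hF0 : F 0 = 0 := by simp [hFdef, hf0]
  have hc : (0:ℝ) < ∑ m, a m * p m :=
    Finset.sum_pos (fun m _ => mul_pos (ha m) (hp m)) Finset.univ_nonempty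
  have hFd0 : HasDerivAt F (∑ m, a m * p m) 0 := by
    have := hFd 0 le_rfl
    have heq : (∑ m, (a m - f m 0) * (p m + q m * F 0)) = ∑ m, a m * p m := by
      apply Finset.sum_congr rfl
      intro m _
      simp [hf0 m, hF0]
    rwa [heq] at this
  -- F positive just right of 0
  have hsmall : ∀ᶠ s in nhdsWithin 0 (Set.Ioi (0:ℝ)), 0 < F s := by
    have hslope := hasDerivAt_iff_tendsto_slope.mp hFd0
    have h1 : Filter.Tendsto (slope F 0) (nhdsWithin 0 (Set.Ioi (0:ℝ))) (nhds (∑ m, a m * p m)) :=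
      hslope.mono_left (nhdsWithin_mono _ (fun x hx => ne_of_gt hx))
    have h2 : ∀ᶠ s in nhdsWithin 0 (Set.Ioi (0:ℝ)), 0 < slope F 0 s :=
      h1.eventually (eventually_gt_nhds hc)
    filter_upwards [h2, self_mem_nhdsWithin] with s hs hs'
    have hslope_eq : slope F 0 s = F s / s := by
      simp [slope, hF0, div_eq_inv_mul]
    rw [hslope_eq] at hs
    have : 0 < s := hs'
    calc (0:ℝ) = 0 * s := by ring
    _ < (F s / s) * s := by exact mul_lt_mul_of_pos_right hs this
    _ = F s := by field_simp
  obtain ⟨δ, hδmem, hδ⟩ := (mem_nhdsGT_iff_exists_Ioo_subset).mp hsmall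
  have hδpos : (0:ℝ) < δ := hδmem
  -- F positive on (0, ∞)
  have hFpos : ∀ t > (0:ℝ), 0 < F t := by
    by_contra hcon
    push_neg at hcon
    obtain ⟨t0, ht0, hFt0⟩ := hcon
    set A : Set ℝ := {t : ℝ | 0 < t ∧ F t ≤ 0} with hAdef
    have hAne : A.Nonempty := ⟨t0, ht0, hFt0⟩
    have hAbdd : BddBelow A := ⟨0, fun x hx => le_of_lt hx.1⟩
    set ts : ℝ := sInf A with htsdef
    have hδleA : ∀ s ∈ A, δ ≤ s := by
      intro s hs
      by_contra hlt
      push_neg at hlt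
      have : 0 < F s := hδ ⟨hs.1, hlt⟩
      linarith [hs.2]
    have htsδ : δ ≤ ts := le_csInf hAne hδleA
    have htspos : 0 < ts := lt_of_lt_of_le hδpos htsδ
    have hFts_le : F ts ≤ 0 := by
      obtain ⟨u, -, hu, hmem⟩ := exists_seq_tendsto_sInf hAne hAbdd
      have hcomp : Filter.Tendsto (fun n => F (u n)) Filter.atTop (nhds (F ts)) :=
        (hFc ts htspos.le).tendsto.comp hu
      exact le_of_tendsto hcomp (Filter.Eventually.of_forall fun n => (hmem n).2)
    have hmid : ∀ s, 0 < s → s < ts → 0 < F s := by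
      intro s hs1 hs2
      by_contra hns
      push_neg at hns
      have : ts ≤ s := csInf_le hAbdd ⟨hs1, hns⟩
      linarith
    have hFts_ge : 0 ≤ F ts := by
      have hev : ∀ᶠ s in nhdsWithin ts (Set.Iio ts), 0 ≤ F s := by
        filter_upwards [Ioo_mem_nhdsLT htspos] with s hs
        exact (hmid s hs.1 hs.2).le
      exact ge_of_tendsto ((hFc ts htspos.le).continuousWithinAt) hev
    have hFnonnegIcc : ∀ s ∈ Set.Icc (0:ℝ) ts, 0 ≤ G s := by
      intro s hs
      rw [hGF s hs.1]
      rcases eq_or_lt_of_le hs.1 with h | h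
      · rw [← h, hF0]
      rcases eq_or_lt_of_le hs.2 with h2 | h2
      · rw [h2]; exact hFts_ge
      exact (hmid s h h2).le
    have hJts : 0 ≤ J ts := intervalIntegral.integral_nonneg htspos.le hFnonnegIcc
    have hFpos_ts : 0 < F ts := by
      have hfpos : ∀ m : Fin K, 0 < f m ts := by
        intro m
        rw [hfk m ts htspos.le]
        have hI : 0 < p m * ts + q m * J ts := by
          have := mul_pos (hp m) htspos
          nlinarith [mul_nonneg (hq m) hJts]
        have : Real.exp (-(p m * ts + q m * J ts)) < 1 := by
          rw [Real.exp_lt_one_iff]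
          linarith
        nlinarith [ha m]
      exact Finset.sum_pos (fun m _ => hfpos m) Finset.univ_nonempty
    linarith
  -- Main comparison
  intro i j hji hne t ht
  have hJpos : 0 < J t := by
    apply intervalIntegral.intervalIntegral_pos_of_pos_on (hGc.intervalIntegrable 0 t)
    · intro s hs
      rw [hGF s hs.1.le]
      exact hFpos s hs.1
    · exact ht
  have hpij : p j ≤ p i := hpmono hji.le
  have hqij : q j ≤ q i := hqmono hji.le
  have hI : p j * t + q j * J t < p i * t + q i * J t := by
    rcases eq_or_lt_of_le hpij with hpe | hpl
    · have hqne : q j ≠ q i := by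
        intro hqe
        exact hne (by rw [hpe, hqe])
      have hql : q j < q i := lt_of_le_of_ne hqij hqne
      nlinarith
    · nlinarith [mul_nonneg (sub_nonneg.mpr hqij) hJpos.le]
  rw [hfk i t ht.le, hfk j t ht.le]
  rw [mul_comm (a i), mul_comm (a j), mul_div_assoc, mul_div_assoc,
    div_self (ne_of_gt (ha i)), div_self (ne_of_gt (ha j)), mul_one, mul_one]
  have : Real.exp (-(p i * t + q i * J t)) < Real.exp (-(p j * t + q j * J t)) :=
    Real.exp_lt_exp.mpr (by linarith)
  linarith
end

section
/- Let K ≥ 1, a_k > 0 with Σ a_k = 1, p_k > 0, q_k ≥ 0 nondecreasing in k (positively monotonically related), with at least two groups having distinct parameters. Let (f_k) solve f_k' = (a_k - f_k)(p_k + q_k F), F = Σ f_m, f_k(0)=0, and define p̄ = Σ a_k p_k, q̄ = Σ a_k q_k. Then F(t) < f_Bass(t; p̄, q̄) for all t > 0, where f_Bass solves f' = (1-f)(p̄ + q̄ f), f(0)=0. (Heterogeneity slows down diffusion.) -/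
open Real Finset MeasureTheory intervalIntegral

private lemma cheb_id' {K : ℕ} (a x y : Fin K → ℝ) (hsum : ∑ k, a k = 1) :
    ∑ k, a k * (x k * y k) - (∑ k, a k * x k) * (∑ k, a k * y k)
      = (∑ k, ∑ l, a k * a l * ((x k - x l) * (y k - y l))) / 2 := by
  have h1 : ∀ k : Fin K, ∑ l, a k * a l * ((x k - x l) * (y k - y l))
      = (a k * (x k * y k)) * (∑ l, a l) - (a k * x k) * (∑ l, a l * y l)
        - (a k * y k) * (∑ l, a l * x l) + a k * (∑ l, a l * (x l * y l)) := by
    intro k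
    rw [mul_sum, mul_sum, mul_sum, mul_sum]
    rw [← sum_sub_distrib, ← sum_sub_distrib, ← sum_add_distrib]
    exact sum_congr rfl fun l _ => by ring
  rw [sum_congr rfl fun k _ => h1 k]
  rw [sum_add_distrib, sum_sub_distrib, sum_sub_distrib, ← sum_mul, ← sum_mul, ← sum_mul,
    ← sum_mul, hsum]
  ring

set_option maxHeartbeats 2000000 in
theorem heterogeneity_slows_diffusion (K : ℕ) (hK : 1 ≤ K)
    (a p q : Fin K → ℝ)
    (ha : ∀ k, 0 < a k) (hsum : ∑ k, a k = 1)
    (hp : ∀ k, 0 < p k) (hq : ∀ k, 0 ≤ q k)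
    (hpmono : Monotone p) (hqmono : Monotone q)
    (hhet : ∃ i j : Fin K, (p i, q i) ≠ (p j, q j))
    (f : Fin K → ℝ → ℝ) (hf0 : ∀ k, f k 0 = 0)
    (hode : ∀ k, ∀ t ≥ (0:ℝ),
      HasDerivAt (f k) ((a k - f k t) * (p k + q k * ∑ m, f m t)) t) :
    ∀ t > (0:ℝ),
      (∑ k, f k t) <
        (1 - Real.exp (-((∑ k, a k * p k) + (∑ k, a k * q k)) * t)) /
        (1 + ((∑ k, a k * q k) / (∑ k, a k * p k)) *
            Real.exp (-((∑ k, a k * p k) + (∑ k, a k * q k)) * t)) := by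
  have hK0 : 0 < K := hK
  set pb := ∑ k, a k * p k with hpbdef
  set qb := ∑ k, a k * q k with hqbdef
  set F : ℝ → ℝ := fun s => ∑ m, f m s with hFdef
  clear_value pb qb
  intro T hT
  have hne : (univ : Finset (Fin K)).Nonempty := ⟨⟨0, hK0⟩, mem_univ _⟩
  have hpb : 0 < pb := by
    rw [hpbdef]; exact sum_pos (fun k _ => mul_pos (ha k) (hp k)) hne
  have hqb : 0 ≤ qb := by
    rw [hqbdef]; exact sum_nonneg fun k _ => mul_nonneg (ha k).le (hq k)
  have hF0 : F 0 = 0 := by simp [hFdef, hf0]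
  -- derivatives and continuity of F
  set c : Fin K → ℝ → ℝ := fun k s => p k + q k * F s with hcdef
  have hode' : ∀ (k : Fin K) t, 0 ≤ t →
      HasDerivAt (f k) ((a k - f k t) * c k t) t := fun k t ht => hode k t ht
  have hFderiv : ∀ t, 0 ≤ t → HasDerivAt F (∑ k, (a k - f k t) * c k t) t := by
    intro t ht
    exact HasDerivAt.fun_sum (fun k _ => hode' k t ht)
  have hcontF : ∀ t, 0 ≤ t → ContinuousAt F t := fun t ht => (hFderiv t ht).continuousAt
  have hcontc : ∀ k : Fin K, ContinuousOn (c k) (Set.Ici 0) := fun k x hx =>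
    (continuousAt_const.add (continuousAt_const.mul (hcontF x hx))).continuousWithinAt
  have hcint : ∀ (k : Fin K) s, 0 ≤ s → IntervalIntegrable (c k) volume 0 s := by
    intro k s hs
    apply ContinuousOn.intervalIntegrable
    apply (hcontc k).mono
    rw [Set.uIcc_of_le hs]
    exact fun x hx => hx.1
  set I : Fin K → ℝ → ℝ := fun k s => ∫ x in (0:ℝ)..s, c k x with hIdef
  have hIs : ∀ (k : Fin K) s, I k s = ∫ x in (0:ℝ)..s, c k x := fun k s => rfl
  have hIderiv : ∀ (k : Fin K) x, 0 ≤ x → HasDerivWithinAt (I k) (c k x) (Set.Ici x) x := by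
    intro k x hx
    apply integral_hasDerivWithinAt_right (hcint k x hx) (t := Set.Ioi x)
    · exact ⟨Set.Ici 0, Filter.mem_of_superset self_mem_nhdsWithin
        (fun y hy => le_trans hx (le_of_lt hy)),
        (hcontc k).aestronglyMeasurable measurableSet_Ici⟩
    · exact ((hcontc k) x hx).mono (Set.Ioi_subset_Ici_self.trans (Set.Ici_subset_Ici.mpr hx))
  have hIcont : ∀ (k : Fin K) s, 0 ≤ s → ContinuousOn (I k) (Set.Icc 0 s) := by
    intro k s hs
    have := intervalIntegral.continuousOn_primitive_interval
      (f := c k) (μ := volume) (a := 0) (b := s) ?_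
    · rwa [Set.uIcc_of_le hs] at this
    · rw [Set.uIcc_of_le hs]
      exact ((hcontc k).mono (fun x hx => hx.1)).integrableOn_compact isCompact_Icc
  have hI0 : ∀ k : Fin K, I k 0 = 0 := fun k => intervalIntegral.integral_same
  -- integrating factor solution
  have husol : ∀ (k : Fin K) s, 0 ≤ s → a k - f k s = a k * Real.exp (-(I k s)) := by
    intro k s hs
    have key : ∀ x ∈ Set.Icc (0:ℝ) s,
        (a k - f k x) * Real.exp (I k x) = (a k - f k 0) * Real.exp (I k 0) := by
      apply constant_of_has_deriv_right_zero
      · intro x hx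
        exact ((continuousAt_const.sub (hode' k x hx.1).continuousAt).continuousWithinAt).mul
          ((hIcont k s hs x hx).rexp)
      · intro x hx
        have h1 : HasDerivWithinAt (fun t => a k - f k t) (-((a k - f k x) * c k x))
            (Set.Ici x) x := ((hode' k x hx.1).const_sub (a k)).hasDerivWithinAt
        have h2 : HasDerivWithinAt (fun y => Real.exp (I k y)) (Real.exp (I k x) * c k x)
            (Set.Ici x) x := (hIderiv k x hx.1).exp
        have := h1.mul h2
        exact this.congr_deriv (by ring)
    have := key s (Set.mem_Icc.mpr ⟨hs, le_refl s⟩)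
    rw [hI0 k, hf0 k, Real.exp_zero, sub_zero, mul_one] at this
    rw [Real.exp_neg]
    have hexpne : Real.exp (I k s) ≠ 0 := Real.exp_ne_zero _
    field_simp
    linear_combination this
  have hult : ∀ (k : Fin K) s, 0 ≤ s → 0 < a k - f k s := fun k s hs => by
    rw [husol k s hs]; exact mul_pos (ha k) (Real.exp_pos _)
  have husum : ∀ s : ℝ, ∑ k, (a k - f k s) = 1 - F s := by
    intro s; rw [sum_sub_distrib, hsum]
  have hFlt1 : ∀ s, 0 ≤ s → F s < 1 := by
    intro s hs
    have h1 : 0 < ∑ k, (a k - f k s) := sum_pos (fun k _ => hult k s hs) hne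
    rw [husum] at h1; linarith
  -- F is nonnegative and strictly increasing
  set i0 : Fin K := ⟨0, hK0⟩ with hi0
  set iK : Fin K := ⟨K - 1, Nat.sub_lt hK0 one_pos⟩ with hiK
  set δ : ℝ := p i0 / (q iK + 1) with hδ
  have hqiK : 0 ≤ q iK := hq iK
  have hδpos : 0 < δ := div_pos (hp i0) (by linarith)
  have hδeq : (q iK + 1) * δ = p i0 := by
    rw [hδ, mul_div_cancel₀]; linarith
  have hcpos : ∀ (k : Fin K) x, -δ < F x → 0 < c k x := by
    intro k x hFx
    have h1 : p i0 ≤ p k := hpmono (Fin.le_def.mpr (Nat.zero_le _))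
    have h2 : q k ≤ q iK := hqmono (Fin.le_def.mpr (show (k:ℕ) ≤ K - 1 by have := k.isLt; omega))
    have h3 : q k * (-δ) ≤ q k * F x := mul_le_mul_of_nonneg_left hFx.le (hq k)
    have h4 : q iK * (-δ) ≤ q k * (-δ) := by nlinarith
    show 0 < p k + q k * F x
    nlinarith
  have hDpos : ∀ x, 0 ≤ x → -δ < F x → 0 < ∑ k, (a k - f k x) * c k x := by
    intro x hx hFx
    exact sum_pos (fun k _ => mul_pos (hult k x hx) (hcpos k x hFx)) hne
  have hFSM : ∀ T', 0 ≤ T' → StrictMonoOn F (Set.Icc 0 T') := by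
    intro T' hT'
    have hcontFOn : ∀ s, 0 ≤ s → ContinuousOn F (Set.Icc 0 s) :=
      fun s _ x hx => (hcontF x hx.1).continuousWithinAt
    have hall : ∀ x ∈ Set.Icc (0:ℝ) T', -δ < F x := by
      by_contra hcon
      push_neg at hcon
      obtain ⟨x₀, hx₀, hFx₀⟩ := hcon
      set A : Set ℝ := Set.Icc 0 T' ∩ F ⁻¹' Set.Iic (-δ) with hA
      have hAcl : IsClosed A :=
        (hcontFOn T' hT').preimage_isClosed_of_isClosed isClosed_Icc isClosed_Iic
      have hAne : A.Nonempty := ⟨x₀, hx₀, hFx₀⟩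
      have hAbdd : BddBelow A := ⟨0, fun y hy => hy.1.1⟩
      set s := sInf A with hs
      have hsA : s ∈ A := hAcl.csInf_mem hAne hAbdd
      have hs0 : 0 < s := by
        rcases lt_or_eq_of_le hsA.1.1 with h | h
        · exact h
        · exfalso; have := hsA.2; rw [← h] at this
          simp only [Set.mem_preimage, Set.mem_Iic, hF0] at this
          linarith
      have hless : ∀ x, 0 ≤ x → x < s → -δ < F x := by
        intro x hx hxs
        by_contra hcon2
        push_neg at hcon2
        have : x ∈ A := ⟨⟨hx, le_trans hxs.le hsA.1.2⟩, hcon2⟩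
        exact absurd (csInf_le hAbdd this) (not_le.mpr hxs)
      have hSM : StrictMonoOn F (Set.Icc 0 s) := by
        apply strictMonoOn_of_deriv_pos (convex_Icc _ _) (hcontFOn s hs0.le)
        intro x hx
        rw [interior_Icc] at hx
        rw [(hFderiv x hx.1.le).deriv]
        exact hDpos x hx.1.le (hless x hx.1.le hx.2)
      have h1 : F 0 < F s := hSM ⟨le_refl 0, hs0.le⟩ ⟨hs0.le, le_refl s⟩ hs0
      have h2 : F s ≤ -δ := hsA.2
      rw [hF0] at h1
      linarith
    apply strictMonoOn_of_deriv_pos (convex_Icc _ _) (hcontFOn T' hT')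
    intro x hx
    rw [interior_Icc] at hx
    rw [(hFderiv x hx.1.le).deriv]
    exact hDpos x hx.1.le (hall x ⟨hx.1.le, hx.2.le⟩)
  have hFpos : ∀ s, 0 < s → 0 < F s := by
    intro s hs
    have := hFSM s hs.le ⟨le_refl 0, hs.le⟩ ⟨hs.le, le_refl s⟩ hs
    rwa [hF0] at this
  have hFnonneg : ∀ s, 0 ≤ s → 0 ≤ F s := by
    intro s hs
    rcases lt_or_eq_of_le hs with h | h
    · exact (hFpos s h).le
    · rw [← h, hF0]
  -- monotonicity in the group index
  have hcmono : ∀ (i j : Fin K), i ≤ j → ∀ x, 0 ≤ x → c i x ≤ c j x := by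
    intro i j hij x hx
    show p i + q i * F x ≤ p j + q j * F x
    have := mul_le_mul_of_nonneg_right (hqmono hij) (hFnonneg x hx)
    have := hpmono hij
    linarith
  have hImono : ∀ (i j : Fin K), i ≤ j → ∀ s, 0 ≤ s → I i s ≤ I j s := by
    intro i j hij s hs
    rw [hIs, hIs]
    exact intervalIntegral.integral_mono_on hs (hcint i s hs) (hcint j s hs)
      (fun x hx => hcmono i j hij x hx.1)
  -- the strict heterogeneous pair
  obtain ⟨i₁, j₁, hij₁⟩ := hhet
  have hpair : ∃ i j : Fin K, i ≤ j ∧ (p i, q i) ≠ (p j, q j) := by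
    rcases le_total i₁ j₁ with h | h
    exacts [⟨i₁, j₁, h, hij₁⟩, ⟨j₁, i₁, h, Ne.symm hij₁⟩]
  obtain ⟨i, j, hijle, hijne⟩ := hpair
  have hcstrict : ∀ x, 0 < x → c i x < c j x := by
    intro x hx
    have h1 := hpmono hijle
    have h2 := hqmono hijle
    have hFx := hFpos x hx
    show p i + q i * F x < p j + q j * F x
    rcases lt_or_eq_of_le h1 with h | h
    · nlinarith [mul_le_mul_of_nonneg_right h2 hFx.le]
    · have hqij : q i < q j := by
        rcases lt_or_eq_of_le h2 with h' | h'
        · exact h'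
        · exact absurd (Prod.ext h h') hijne
      nlinarith
  have hIstrict : ∀ s, 0 < s → I i s < I j s := by
    intro s hs
    have hsub : (0:ℝ) < ∫ x in (0:ℝ)..s, (c j x - c i x) :=
      intervalIntegral_pos_of_pos_on ((hcint j s hs.le).sub (hcint i s hs.le))
        (fun x hx => sub_pos.mpr (hcstrict x hx.1)) hs
    rw [intervalIntegral.integral_sub (hcint j s hs.le) (hcint i s hs.le)] at hsub
    rw [hIs, hIs]
    linarith
  -- Chebyshev gap
  have hgap : ∀ s, 0 ≤ s →
      ∑ k, (a k - f k s) * c k s - (1 - F s) * (pb + qb * F s)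
      = (∑ k, ∑ l, a k * a l *
          ((Real.exp (-(I k s)) - Real.exp (-(I l s))) * (c k s - c l s))) / 2 := by
    intro s hs
    have hid := cheb_id' a (fun k => Real.exp (-(I k s))) (fun k => c k s) hsum
    beta_reduce at hid
    have e1 : ∑ k, a k * (Real.exp (-(I k s)) * c k s) = ∑ k, (a k - f k s) * c k s :=
      sum_congr rfl fun k _ => by rw [husol k s hs]; ring
    have e2 : ∑ k, a k * Real.exp (-(I k s)) = 1 - F s := by
      rw [← husum s]; exact sum_congr rfl fun k _ => (husol k s hs).symm
    have e3 : ∑ k, a k * c k s = pb + qb * F s := by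
      have h4 : ∀ k : Fin K, a k * c k s = a k * p k + a k * q k * F s := fun k => by
        show a k * (p k + q k * F s) = _; ring
      rw [sum_congr rfl fun k _ => h4 k, sum_add_distrib, ← sum_mul, hpbdef, hqbdef]
    rw [e1, e2, e3] at hid
    exact hid
  have htermle : ∀ s, 0 ≤ s → ∀ k l : Fin K,
      a k * a l * ((Real.exp (-(I k s)) - Real.exp (-(I l s))) * (c k s - c l s)) ≤ 0 := by
    intro s hs k l
    have hkl : ∀ k l : Fin K, k ≤ l →
        (Real.exp (-(I k s)) - Real.exp (-(I l s))) * (c k s - c l s) ≤ 0 := by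
      intro k l h
      have h1 : Real.exp (-(I l s)) ≤ Real.exp (-(I k s)) :=
        Real.exp_le_exp.mpr (neg_le_neg (hImono k l h s hs))
      have h2 : c k s ≤ c l s := hcmono k l h s hs
      exact mul_nonpos_iff.mpr (Or.inl ⟨by linarith, by linarith⟩)
    rcases le_total k l with h | h
    · exact mul_nonpos_iff.mpr (Or.inl ⟨(mul_pos (ha k) (ha l)).le, hkl k l h⟩)
    · have h' : (Real.exp (-(I k s)) - Real.exp (-(I l s))) * (c k s - c l s)
          = (Real.exp (-(I l s)) - Real.exp (-(I k s))) * (c l s - c k s) := by ring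
      rw [h']
      exact mul_nonpos_iff.mpr (Or.inl ⟨(mul_pos (ha k) (ha l)).le, hkl l k h⟩)
  have hDle : ∀ x, 0 ≤ x →
      ∑ k, (a k - f k x) * c k x ≤ (1 - F x) * (pb + qb * F x) := by
    intro x hx
    have h1 := hgap x hx
    have h2 : ∑ k, ∑ l, a k * a l *
        ((Real.exp (-(I k x)) - Real.exp (-(I l x))) * (c k x - c l x)) ≤ 0 :=
      sum_nonpos fun k _ => sum_nonpos fun l _ => htermle x hx k l
    linarith
  have hDlt : ∀ x, 0 < x →
      ∑ k, (a k - f k x) * c k x < (1 - F x) * (pb + qb * F x) := by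
    intro x hx
    have h1 := hgap x hx.le
    have hstr : a i * a j *
        ((Real.exp (-(I i x)) - Real.exp (-(I j x))) * (c i x - c j x)) < 0 := by
      have hx1 : Real.exp (-(I j x)) < Real.exp (-(I i x)) :=
        Real.exp_lt_exp.mpr (neg_lt_neg (hIstrict x hx))
      have hx2 : c i x < c j x := hcstrict x hx
      nlinarith [mul_pos (mul_pos (ha i) (ha j))
        (mul_pos (sub_pos.mpr hx1) (sub_pos.mpr hx2))]
    have hinner : ∑ l, a i * a l *
        ((Real.exp (-(I i x)) - Real.exp (-(I l x))) * (c i x - c l x)) < 0 := by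
      have := Finset.sum_lt_sum (f := fun l => a i * a l *
          ((Real.exp (-(I i x)) - Real.exp (-(I l x))) * (c i x - c l x)))
        (g := fun _ => (0:ℝ))
        (fun l _ => htermle x hx.le i l) ⟨j, mem_univ j, hstr⟩
      simpa only [Finset.sum_const_zero] using this
    have h2 : ∑ k, ∑ l, a k * a l *
        ((Real.exp (-(I k x)) - Real.exp (-(I l x))) * (c k x - c l x)) < 0 := by
      have := Finset.sum_lt_sum (f := fun k => ∑ l, a k * a l *
          ((Real.exp (-(I k x)) - Real.exp (-(I l x))) * (c k x - c l x)))
        (g := fun _ => (0:ℝ))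
        (fun k _ => sum_nonpos fun l _ => htermle x hx.le k l) ⟨i, mem_univ i, hinner⟩
      simpa only [Finset.sum_const_zero] using this
    linarith
  clear_value F c I
  -- the Bass solution
  set B : ℝ → ℝ := fun s =>
    (1 - Real.exp (-(pb + qb) * s)) / (1 + qb / pb * Real.exp (-(pb + qb) * s)) with hBdef
  have hden : ∀ s : ℝ, 0 < 1 + qb / pb * Real.exp (-(pb + qb) * s) := by
    intro s
    have h1 : 0 ≤ qb / pb * Real.exp (-(pb + qb) * s) :=
      mul_nonneg (div_nonneg hqb hpb.le) (Real.exp_pos _).le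
    linarith
  have hB0 : B 0 = 0 := by
    rw [hBdef]; simp
  have hBderiv : ∀ s : ℝ, HasDerivAt B ((1 - B s) * (pb + qb * B s)) s := by
    intro s
    have hE : HasDerivAt (fun t : ℝ => Real.exp (-(pb + qb) * t))
        (Real.exp (-(pb + qb) * s) * (-(pb + qb))) s := by
      simpa using ((hasDerivAt_id s).const_mul (-(pb + qb))).exp
    have hnum : HasDerivAt (fun t : ℝ => 1 - Real.exp (-(pb + qb) * t))
        (-(Real.exp (-(pb + qb) * s) * (-(pb + qb)))) s := hE.const_sub 1
    have hde : HasDerivAt (fun t : ℝ => 1 + qb / pb * Real.exp (-(pb + qb) * t))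
        (qb / pb * (Real.exp (-(pb + qb) * s) * (-(pb + qb)))) s :=
      (hE.const_mul (qb / pb)).const_add 1
    have h := hnum.div hde (hden s).ne'
    refine h.congr_deriv ?_
    rw [hBdef]
    have hd' := (hden s).ne'
    field_simp
    ring
  have hBnonneg : ∀ s, 0 ≤ s → 0 ≤ B s := by
    intro s hs
    rw [hBdef]
    apply div_nonneg _ (hden s).le
    have : Real.exp (-(pb + qb) * s) ≤ 1 := by
      rw [Real.exp_le_one_iff]
      nlinarith
    linarith
  have hBlt1 : ∀ s : ℝ, B s < 1 := by
    intro s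
    rw [hBdef, div_lt_one (hden s)]
    have h1 := Real.exp_pos (-(pb + qb) * s)
    have h2 : 0 ≤ qb / pb * Real.exp (-(pb + qb) * s) :=
      mul_nonneg (div_nonneg hqb hpb.le) (Real.exp_pos _).le
    linarith
  clear_value B
  -- weak comparison: F ≤ B on [0, T]
  have hFleB : ∀ x ∈ Set.Icc (0:ℝ) T, F x ≤ B x := by
    by_contra hcon
    push_neg at hcon
    obtain ⟨t₁, ht₁, hBF⟩ := hcon
    have hcontFB : ContinuousOn (fun x => F x - B x) (Set.Icc 0 t₁) := fun x hx =>
      ((hcontF x hx.1).sub (hBderiv x).continuousAt).continuousWithinAt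
    have ht₁0 : 0 < t₁ := by
      rcases lt_or_eq_of_le ht₁.1 with h | h
      · exact h
      · exfalso; rw [← h, hF0, hB0] at hBF; exact lt_irrefl 0 hBF
    set S : Set ℝ := Set.Icc 0 t₁ ∩ (fun x => F x - B x) ⁻¹' Set.Iic 0 with hSdef
    have hScl : IsClosed S := hcontFB.preimage_isClosed_of_isClosed isClosed_Icc isClosed_Iic
    have hSne : S.Nonempty := ⟨0, ⟨le_refl 0, ht₁0.le⟩, by
      simp only [Set.mem_preimage, Set.mem_Iic, hF0, hB0, sub_zero, le_refl]⟩
    have hSbdd : BddAbove S := ⟨t₁, fun y hy => hy.1.2⟩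
    set s := sSup S with hsdef
    have hsS : s ∈ S := hScl.csSup_mem hSne hSbdd
    have hs0 : 0 ≤ s := hsS.1.1
    have hsFB : F s ≤ B s := by
      have := hsS.2; simp only [Set.mem_preimage, Set.mem_Iic] at this; linarith
    have hst₁ : s < t₁ := by
      rcases lt_or_eq_of_le hsS.1.2 with h | h
      · exact h
      · exfalso; rw [h] at hsFB; linarith
    have hgt : ∀ x, s < x → x ≤ t₁ → B x < F x := by
      intro x h1 h2
      by_contra h3
      push_neg at h3
      have hx : x ∈ S := ⟨⟨le_trans hs0 h1.le, h2⟩, by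
        simp only [Set.mem_preimage, Set.mem_Iic]; linarith⟩
      exact absurd (le_csSup hSbdd hx) (not_le.mpr h1)
    -- the function (F - B) * exp(-qb x) is antitone on [s, t₁]
    have hAnti : AntitoneOn (fun x => (F x - B x) * Real.exp (-qb * x)) (Set.Icc s t₁) := by
      have hasd : ∀ x ∈ Set.Ioo s t₁, HasDerivAt
          (fun x => (F x - B x) * Real.exp (-qb * x))
          (((∑ k, (a k - f k x) * c k x) - (1 - B x) * (pb + qb * B x)) * Real.exp (-qb * x)
            + (F x - B x) * (Real.exp (-qb * x) * (-qb))) x := by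
        intro x hx
        have hx0 : 0 ≤ x := le_trans hs0 hx.1.le
        have hexp : HasDerivAt (fun x : ℝ => Real.exp (-qb * x))
            (Real.exp (-qb * x) * (-qb)) x := by
          simpa using ((hasDerivAt_id x).const_mul (-qb)).exp
        exact ((hFderiv x hx0).sub (hBderiv x)).mul hexp
      apply antitoneOn_of_deriv_nonpos (convex_Icc _ _)
      · intro x hx
        exact (((hcontF x (le_trans hs0 hx.1)).sub (hBderiv x).continuousAt).mul
          (Real.continuous_exp.comp (continuous_const.mul continuous_id)).continuousAt
          ).continuousWithinAt
      · rw [interior_Icc]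
        exact fun x hx => ((hasd x hx).differentiableAt).differentiableWithinAt
      · intro x hx
        rw [interior_Icc] at hx
        rw [(hasd x hx).deriv]
        have hx0 : 0 ≤ x := le_trans hs0 hx.1.le
        have h1 := hDle x hx0
        have h2 := hgt x hx.1 hx.2.le
        have h3 := hFnonneg x hx0
        have h4 := hBnonneg x hx0
        have hexp := Real.exp_pos (-qb * x)
        have key : (∑ k, (a k - f k x) * c k x) - (1 - B x) * (pb + qb * B x)
            - qb * (F x - B x) ≤ 0 := by
          nlinarith [mul_nonneg (sub_nonneg.mpr h2.le) (mul_nonneg hqb (add_nonneg h3 h4)),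
            mul_nonneg (sub_nonneg.mpr h2.le) hpb.le]
        have heq : ((∑ k, (a k - f k x) * c k x) - (1 - B x) * (pb + qb * B x))
              * Real.exp (-qb * x) + (F x - B x) * (Real.exp (-qb * x) * (-qb))
            = ((∑ k, (a k - f k x) * c k x) - (1 - B x) * (pb + qb * B x)
              - qb * (F x - B x)) * Real.exp (-qb * x) := by ring
        rw [heq]
        exact mul_nonpos_iff.mpr (Or.inr ⟨key, hexp.le⟩)
    have h5 := hAnti (Set.mem_Icc.mpr ⟨le_refl s, hst₁.le⟩)
      (Set.mem_Icc.mpr ⟨hst₁.le, le_refl t₁⟩) hst₁.le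
    beta_reduce at h5
    have h6 : 0 < (F t₁ - B t₁) * Real.exp (-qb * t₁) :=
      mul_pos (by linarith) (Real.exp_pos _)
    have h7 : (F s - B s) * Real.exp (-qb * s) ≤ 0 :=
      mul_nonpos_iff.mpr (Or.inr ⟨by linarith, (Real.exp_pos _).le⟩)
    linarith
  -- strict comparison via strictly increasing auxiliary function
  have hstrict : StrictMonoOn (fun x => (B x - F x) * Real.exp ((pb + qb) * x))
      (Set.Icc 0 T) := by
    have hasd : ∀ x ∈ Set.Ioo (0:ℝ) T, HasDerivAt
        (fun x => (B x - F x) * Real.exp ((pb + qb) * x))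
        (((1 - B x) * (pb + qb * B x) - ∑ k, (a k - f k x) * c k x) * Real.exp ((pb + qb) * x)
          + (B x - F x) * (Real.exp ((pb + qb) * x) * (pb + qb))) x := by
      intro x hx
      have hexp : HasDerivAt (fun x : ℝ => Real.exp ((pb + qb) * x))
          (Real.exp ((pb + qb) * x) * (pb + qb)) x := by
        simpa using ((hasDerivAt_id x).const_mul (pb + qb)).exp
      exact ((hBderiv x).sub (hFderiv x hx.1.le)).mul hexp
    apply strictMonoOn_of_deriv_pos (convex_Icc _ _)
    · intro x hx
      exact (((hBderiv x).continuousAt.sub (hcontF x hx.1)).mul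
        (Real.continuous_exp.comp (continuous_const.mul continuous_id)).continuousAt
        ).continuousWithinAt
    · intro x hx
      rw [interior_Icc] at hx
      rw [(hasd x hx).deriv]
      have h1 := hDlt x hx.1
      have h2 := hFleB x ⟨hx.1.le, hx.2.le⟩
      have h3 := hFnonneg x hx.1.le
      have h4 := hBnonneg x hx.1.le
      have h5 := hFlt1 x hx.1.le
      have h6 := hBlt1 x
      have hexp := Real.exp_pos ((pb + qb) * x)
      have key : 0 < (1 - B x) * (pb + qb * B x) - (∑ k, (a k - f k x) * c k x)
          + (B x - F x) * (pb + qb) := by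
        nlinarith [mul_nonneg (sub_nonneg.mpr h2)
          (mul_nonneg hqb (by linarith : 0 ≤ 2 - F x - B x))]
      have heq : ((1 - B x) * (pb + qb * B x) - ∑ k, (a k - f k x) * c k x)
            * Real.exp ((pb + qb) * x)
            + (B x - F x) * (Real.exp ((pb + qb) * x) * (pb + qb))
          = ((1 - B x) * (pb + qb * B x) - (∑ k, (a k - f k x) * c k x)
            + (B x - F x) * (pb + qb)) * Real.exp ((pb + qb) * x) := by ring
      rw [heq]
      exact mul_pos key hexp
  have hfinal := hstrict (Set.mem_Icc.mpr ⟨le_refl 0, hT.le⟩)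
    (Set.mem_Icc.mpr ⟨hT.le, le_refl T⟩) hT
  beta_reduce at hfinal
  have h0 : (B 0 - F 0) * Real.exp ((pb + qb) * 0) = 0 := by
    rw [hB0, hF0]; ring
  rw [h0] at hfinal
  have hexpT := Real.exp_pos ((pb + qb) * T)
  have hgoal : F T < B T := by nlinarith
  rw [hFdef, hBdef] at hgoal
  exact hgoal
end

section
/- For each M ∈ ℕ let u_k^{(M)} solve u_k' = 3^k(u_{k+1} - u_k) for 1 ≤ k ≤ M with u_{M+1} ≡ 0 and u_k(0) = 1. Then u_k^{(M)}(t) ≤ 2 e^{-3^k t} for all 1 ≤ k ≤ M and t ≥ 0; consequently for fixed k and t > (ln 2)/3^k, u_k^{(M)}(t) does not converge to 1 as M → ∞. -/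
open Real Filter

lemma step_bound (c : ℝ) (hc : 0 < c) (f h : ℝ → ℝ)
    (hf0 : f 0 = 1)
    (hder : ∀ t, HasDerivAt f (c * (h t - f t)) t)
    (hb : ∀ t ≥ (0:ℝ), h t ≤ 2 * Real.exp (-(3*c) * t)) :
    ∀ t ≥ (0:ℝ), f t ≤ 2 * Real.exp (-c * t) := by
  set g : ℝ → ℝ := fun t => f t * Real.exp (c * t) + Real.exp (-(2*c) * t) with hg
  have hgder : ∀ t, HasDerivAt g
      (c * (h t - f t) * Real.exp (c * t) + f t * (Real.exp (c * t) * c)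
        + Real.exp (-(2*c) * t) * (-(2*c))) t := by
    intro t
    have h1 : HasDerivAt (fun t => Real.exp (c * t)) (Real.exp (c * t) * c) t :=
      (HasDerivAt.exp ((hasDerivAt_id t).const_mul c)).congr_deriv (by simp only [id_eq]; ring)
    have h2 : HasDerivAt (fun t => Real.exp (-(2*c) * t)) (Real.exp (-(2*c) * t) * (-(2*c))) t :=
      (HasDerivAt.exp ((hasDerivAt_id t).const_mul (-(2*c)))).congr_deriv (by simp only [id_eq]; ring)
    exact ((hder t).mul h1).add h2
  have hgmono : AntitoneOn g (Set.Ici 0) := by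
    apply antitoneOn_of_deriv_nonpos (convex_Ici 0)
    · exact (Differentiable.continuous (fun t => (hgder t).differentiableAt)).continuousOn
    · intro t ht
      exact ((hgder t).differentiableAt).differentiableWithinAt
    · intro t ht
      rw [(hgder t).deriv]
      have ht0 : (0:ℝ) ≤ t := le_of_lt (by simpa using ht)
      have hbt := hb t ht0
      have key : c * h t * Real.exp (c * t) ≤ 2 * c * Real.exp (-(2*c) * t) := by
        have : c * h t * Real.exp (c * t) ≤ c * (2 * Real.exp (-(3*c) * t)) * Real.exp (c * t) := by
          have := mul_le_mul_of_nonneg_left hbt hc.le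
          nlinarith [Real.exp_pos (c * t)]
        calc c * h t * Real.exp (c * t) ≤ c * (2 * Real.exp (-(3*c) * t)) * Real.exp (c * t) := this
          _ = 2 * c * (Real.exp (-(3*c) * t) * Real.exp (c * t)) := by ring
          _ = 2 * c * Real.exp (-(2*c) * t) := by rw [← Real.exp_add]; ring_nf
      nlinarith [key]
  intro t ht
  have hgt := hgmono (Set.self_mem_Ici) (Set.mem_Ici.mpr ht) ht
  have hg0 : g 0 = 2 := by simp [hg, hf0]; norm_num
  have hexp2 : (0:ℝ) < Real.exp (-(2*c) * t) := Real.exp_pos _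
  have hft : f t * Real.exp (c * t) ≤ 2 := by
    have : g t ≤ 2 := hg0 ▸ hgt
    simp only [hg] at this
    linarith
  have hec : (0:ℝ) < Real.exp (c * t) := Real.exp_pos _
  rw [neg_mul, Real.exp_neg, ← div_eq_mul_inv, le_div_iff₀ hec]
  exact hft

theorem fast_coefficients_no_convergence (u : ℕ → ℕ → ℝ → ℝ)
    (htop : ∀ M : ℕ, ∀ t : ℝ, u M (M + 1) t = 0)
    (hode : ∀ M : ℕ, ∀ k : ℕ, 1 ≤ k → k ≤ M →
      ∀ t : ℝ, HasDerivAt (u M k) ((3:ℝ) ^ k * (u M (k + 1) t - u M k t)) t)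
    (h0 : ∀ M : ℕ, ∀ k : ℕ, 1 ≤ k → k ≤ M → u M k 0 = 1) :
    (∀ M : ℕ, ∀ k : ℕ, 1 ≤ k → k ≤ M → ∀ t ≥ (0:ℝ),
      u M k t ≤ 2 * Real.exp (-(3:ℝ) ^ k * t)) ∧
    (∀ k : ℕ, 1 ≤ k → ∀ t : ℝ, Real.log 2 / (3:ℝ) ^ k < t →
      ¬ Tendsto (fun M => u M k t) atTop (nhds 1)) := by
  have bound : ∀ M : ℕ, ∀ k : ℕ, 1 ≤ k → k ≤ M → ∀ t ≥ (0:ℝ),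
      u M k t ≤ 2 * Real.exp (-(3:ℝ) ^ k * t) := by
    intro M
    have key : ∀ n : ℕ, ∀ k : ℕ, M + 1 ≤ k + n → 1 ≤ k → k ≤ M + 1 →
        ∀ t ≥ (0:ℝ), u M k t ≤ 2 * Real.exp (-(3:ℝ) ^ k * t) := by
      intro n
      induction n with
      | zero =>
        intro k h1 _ h3 t ht
        have hkeq : k = M + 1 := by omega
        subst hkeq
        rw [htop M t]
        positivity
      | succ n ih =>
        intro k h1 hk1 hk2 t ht
        by_cases hkM : k = M + 1
        · subst hkM; rw [htop M t]; positivity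
        · have hkM' : k ≤ M := by omega
          have hc : (0:ℝ) < 3 ^ k := by positivity
          have hnext : ∀ s ≥ (0:ℝ), u M (k+1) s ≤ 2 * Real.exp (-(3 * 3 ^ k) * s) := by
            intro s hs
            have h3e : (3:ℝ) * 3 ^ k = 3 ^ (k+1) := by rw [pow_succ]; ring
            rw [h3e]
            exact ih (k+1) (by omega) (by omega) (by omega) s hs
          exact step_bound ((3:ℝ)^k) hc (u M k) (u M (k+1)) (h0 M k hk1 hkM')
            (fun s => hode M k hk1 hkM' s) hnext t ht
    intro k hk1 hk2 t ht
    exact key M k (by omega) hk1 (by omega) t ht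
  refine ⟨bound, ?_⟩
  intro k hk t ht hT
  have h3k : (0:ℝ) < 3 ^ k := by positivity
  have hlog : (0:ℝ) < Real.log 2 := Real.log_pos (by norm_num)
  have ht0 : (0:ℝ) ≤ t := le_of_lt (lt_trans (by positivity) ht)
  have hlt : Real.log 2 < t * 3 ^ k := (div_lt_iff₀ h3k).mp ht
  have hc1 : 2 * Real.exp (-(3:ℝ) ^ k * t) < 1 := by
    have : Real.exp (-(3:ℝ) ^ k * t) < Real.exp (-Real.log 2) := by
      apply Real.exp_lt_exp.mpr; nlinarith
    have h2 : Real.exp (-Real.log 2) = 1 / 2 := by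
      rw [Real.exp_neg, Real.exp_log (by norm_num : (0:ℝ) < 2)]
      norm_num
    rw [h2] at this
    linarith
  have hev1 : ∀ᶠ M in atTop, 2 * Real.exp (-(3:ℝ) ^ k * t) < u M k t :=
    hT.eventually (eventually_gt_nhds hc1)
  have hev2 : ∀ᶠ M in atTop, k ≤ M := eventually_ge_atTop k
  obtain ⟨M, h1, h2⟩ := (hev1.and hev2).exists
  exact absurd (bound M k hk h2 t ht0) (not_le.mpr h1)
end
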